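/- arXiv:2001.10749 — 6 statements merged into one kernel-verified Lean document; each statement's English description precedes it below -/
import Mathlib

section
/- Let m ≥ 2 be an integer. For every natural number k not divisible by m, cos²(kπ/m) ≤ cos²(π/m), and moreover cos²(π/m) < 1. Hence the acceptance probability of the 2-state quantum finite automaton 𝒜 on any word a^k not in L_m is bounded above by cos²(π/m), which is strictly smaller than 1. -/
open Real

lemma cos_sq_add_nat_mul_pi (x : ℝ) (n : ℕ) : Real.cos (x + n * π) ^ 2 = Real.cos x ^ 2 := by
  induction n with
  | zero => simp
  | succ n ih =>
    have h : x + (n + 1 : ℕ) * π = (x + n * π) + π := by push_cast; ring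
    rw [h, Real.cos_add_pi, neg_sq, ih]

/-- For `m ≥ 2` and `k` not divisible by `m`, the acceptance probability of the 2-state
1qfa `𝒜` on `a^k ∉ L_m` satisfies `cos²(kπ/m) ≤ cos²(π/m) < 1`. -/
theorem acceptance_probability_bound (m : ℕ) (hm : 2 ≤ m) :
    (∀ k : ℕ, ¬ m ∣ k → Real.cos (k * π / m) ^ 2 ≤ Real.cos (π / m) ^ 2) ∧
    Real.cos (π / m) ^ 2 < 1 := by
  have hm0 : (0 : ℝ) < m := by positivity
  have hπm : 0 < π / m := div_pos Real.pi_pos hm0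
  have hπm2 : π / m ≤ π / 2 := by
    apply div_le_div_of_nonneg_left Real.pi_pos.le (by norm_num)
    exact_mod_cast hm
  have hcos0 : 0 ≤ Real.cos (π / m) :=
    Real.cos_nonneg_of_mem_Icc ⟨by linarith, hπm2⟩
  constructor
  · intro k hk
    set r := k % m with hr
    have hr1 : 1 ≤ r := Nat.one_le_iff_ne_zero.2
      (fun h => hk (Nat.dvd_of_mod_eq_zero h))
    have hrm : r < m := Nat.mod_lt _ (by omega)
    have hksplit : (k : ℝ) = m * (k / m : ℕ) + r := by
      rw [hr]; exact_mod_cast (Nat.div_add_mod k m).symm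
    have hkey : (k : ℝ) * π / m = r * π / m + (k / m : ℕ) * π := by
      rw [hksplit]; field_simp; ring
    rw [hkey, cos_sq_add_nat_mul_pi]
    -- bounds on r*π/m
    have hx0 : 0 ≤ (r : ℝ) * π / m := by positivity
    have hr1' : (1:ℝ) ≤ (r:ℝ) := by exact_mod_cast hr1
    have hxl : π / m ≤ (r : ℝ) * π / m := by
      gcongr
      nlinarith [Real.pi_pos]
    have hrm' : (r : ℝ) ≤ (m:ℝ) - 1 := by
      have : (r : ℝ) + 1 ≤ m := by exact_mod_cast hrm
      linarith
    have hxu : (r : ℝ) * π / m ≤ π - π / m := by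
      have hπeq : π - π / m = ((m:ℝ) - 1) * π / m := by field_simp
      rw [hπeq]
      gcongr
    have hub : Real.cos ((r : ℝ) * π / m) ≤ Real.cos (π / m) :=
      Real.cos_le_cos_of_nonneg_of_le_pi (by positivity)
        (by linarith) hxl
    have hlb : -Real.cos (π / m) ≤ Real.cos ((r : ℝ) * π / m) := by
      have := Real.cos_le_cos_of_nonneg_of_le_pi hx0 (by linarith) hxu
      rwa [Real.cos_pi_sub] at this
    exact sq_le_sq' hlb hub
  · have h1 : Real.cos (π / m) < Real.cos 0 :=
      Real.cos_lt_cos_of_nonneg_of_le_pi le_rfl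
        (by linarith [Real.pi_pos]) hπm
    rw [Real.cos_zero] at h1
    exact pow_lt_one₀ hcos0 h1 (by norm_num)
end

section
/- Let m ≥ 2 be an integer, and set p(k) = cos²(kπ/m), λ = (1 + cos²(π/m))/2 and ρ = (1 − cos²(π/m))/2. Then ρ > 0 and for every natural number k: (i) p(k) > λ if and only if m divides k, and (ii) |p(k) − λ| ≥ ρ. Hence the language L_m is accepted by a measure-once one-way quantum finite automaton with two basis states with cut point λ isolated by ρ. -/
open Real

lemma cos_bound_aux (m r : ℕ) (hm : 2 ≤ m) (hr1 : 1 ≤ r) (hr2 : r < m) :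
    Real.cos (2 * (r * π / m)) ≤ Real.cos (2 * (π / m)) := by
  have hm0 : (0:ℝ) < m := by positivity
  have hr1' : (1:ℝ) ≤ r := by exact_mod_cast hr1
  have hr2' : (r:ℝ) + 1 ≤ m := by exact_mod_cast hr2
  have hm2 : (2:ℝ) ≤ m := by exact_mod_cast hm
  have hpi := Real.pi_pos
  have e1 : 2 * (π / (m:ℝ)) = 2 * π / m := by ring
  have e2 : 2 * ((r:ℝ) * π / m) = 2 * r * π / m := by ring
  have hx : 2 * (π / (m:ℝ)) ≤ 2 * ((r:ℝ) * π / m) := by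
    rw [e1, e2, div_le_div_iff₀ hm0 hm0]
    nlinarith [mul_pos hpi hm0]
  have hy : 2 * ((r:ℝ) * π / m) ≤ 2 * π - 2 * (π / m) := by
    rw [e1, e2, le_sub_iff_add_le, ← add_div, div_le_iff₀ hm0]
    nlinarith
  rcases le_or_gt (2 * ((r:ℝ) * π / m)) π with h | h
  · exact Real.cos_le_cos_of_nonneg_of_le_pi (by positivity) h hx
  · have heq : Real.cos (2 * ((r:ℝ) * π / m)) = Real.cos (2 * π - 2 * ((r:ℝ) * π / m)) := by
      rw [Real.cos_two_pi_sub]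
    rw [heq]
    apply Real.cos_le_cos_of_nonneg_of_le_pi (by positivity)
    · linarith
    · linarith

/-- The language `L_m` is accepted by the 2-basis-state 1qfa `𝒜`, whose acceptance
probability on `a^k` is `p(k) = cos²(kπ/m)`, with cut point `λ = (1 + cos²(π/m))/2`
isolated by `ρ = (1 − cos²(π/m))/2 > 0`. -/
theorem isolated_cut_point (m : ℕ) (hm : 2 ≤ m)
    (p : ℕ → ℝ) (hp : ∀ k, p k = Real.cos (k * π / m) ^ 2)
    (lam rho : ℝ)
    (hlam : lam = (1 + Real.cos (π / m) ^ 2) / 2)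
    (hrho : rho = (1 - Real.cos (π / m) ^ 2) / 2) :
    0 < rho ∧ ∀ k : ℕ, (p k > lam ↔ m ∣ k) ∧ |p k - lam| ≥ rho := by
  have hm0 : (0:ℝ) < m := by positivity
  have hm2 : (2:ℝ) ≤ m := by exact_mod_cast hm
  have hpi := Real.pi_pos
  -- cos(π/m)² < 1
  have hlt1 : Real.cos (π / m) ^ 2 < 1 := by
    have h1 : Real.cos (π / m) < 1 := by
      have := Real.cos_lt_cos_of_nonneg_of_le_pi (le_refl (0:ℝ))
        (show π / m ≤ π by rw [div_le_iff₀ hm0]; nlinarith)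
        (show (0:ℝ) < π / m by positivity)
      simpa using this
    have h2 : 0 ≤ Real.cos (π / m) := by
      apply Real.cos_nonneg_of_neg_pi_div_two_le_of_le
      · have : (0:ℝ) ≤ π / m := by positivity
        linarith
      · rw [div_le_div_iff₀ hm0 (by norm_num : (0:ℝ) < 2)]
        nlinarith
    nlinarith
  have hrho0 : 0 < rho := by rw [hrho]; linarith
  refine ⟨hrho0, fun k => ?_⟩
  have hpk : p k = 1 / 2 + Real.cos (2 * ((k:ℝ) * π / m)) / 2 := by
    rw [hp, Real.cos_sq]
  by_cases hdvd : m ∣ k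
  · obtain ⟨q, rfl⟩ := hdvd
    have hk : 2 * (((m * q : ℕ):ℝ) * π / m) = (q : ℝ) * (2 * π) := by
      push_cast
      field_simp
    have hpk1 : p (m * q) = 1 := by
      rw [hpk, hk, Real.cos_nat_mul_two_pi]; norm_num
    constructor
    · constructor
      · intro; exact ⟨q, rfl⟩
      · intro _
        rw [hpk1, hlam]
        linarith
    · rw [hpk1, hlam, hrho, abs_of_nonneg (by linarith)]
      linarith
  · set r := k % m with hr
    have hr1 : 1 ≤ r :=
      Nat.pos_of_ne_zero (fun h0 => hdvd (Nat.dvd_of_mod_eq_zero h0))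
    have hr2 : r < m := Nat.mod_lt _ (by omega)
    set q := k / m with hq
    have hkrq : k = m * q + r := (Nat.div_add_mod k m).symm
    have hangle : 2 * ((k:ℝ) * π / m) = 2 * ((r:ℝ) * π / m) + (q : ℝ) * (2 * π) := by
      have hkc : (k:ℝ) = m * q + r := by exact_mod_cast hkrq
      rw [hkc]
      field_simp
      ring
    have hcos : Real.cos (2 * ((k:ℝ) * π / m)) = Real.cos (2 * ((r:ℝ) * π / m)) := by
      rw [hangle, Real.cos_add_nat_mul_two_pi]
    have hbound := cos_bound_aux m r hm hr1 hr2
    have hcsq := Real.cos_sq (π / m)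
    have hple : p k ≤ lam - rho := by
      rw [hpk, hcos, hlam, hrho]
      nlinarith
    constructor
    · constructor
      · intro hgt; exfalso; linarith
      · intro h; exact absurd h hdvd
    · rw [abs_of_nonpos (by linarith)]
      linarith
end

section
/- Let m > 0 be a natural number and let M be a deterministic finite automaton over the one-letter alphabet Unit with a finite state type σ. If the language accepted by M equals { w : m ∣ w.length }, then M has at least m states, i.e., Fintype.card σ ≥ m. -/
private lemma dfa_aux (m : ℕ) {σ : Type*} (M : DFA Unit σ)
    (hmem : ∀ w : List Unit, w ∈ M.accepts ↔ m ∣ w.length)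
    (i j : ℕ) (hij : M.eval (List.replicate i ()) = M.eval (List.replicate j ()))
    (hlt : i < j) (hj : j < m) : False := by
  have key : M.eval (List.replicate i () ++ List.replicate (m - i) ())
      = M.eval (List.replicate j () ++ List.replicate (m - i) ()) := by
    simp only [DFA.eval, DFA.evalFrom_of_append]
    rw [DFA.eval] at hij
    rw [hij]
  have h1 : M.eval (List.replicate i () ++ List.replicate (m - i) ()) ∈ M.accept := by
    rw [← DFA.mem_accepts, hmem]
    simp only [List.length_append, List.length_replicate]
    exact ⟨1, by omega⟩
  rw [key, ← DFA.mem_accepts, hmem] at h1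
  simp only [List.length_append, List.length_replicate] at h1
  have hji : j + (m - i) = m + (j - i) := by omega
  rw [hji] at h1
  have hd : m ∣ j - i := (Nat.dvd_add_right (dvd_refl m)).mp h1
  have := Nat.le_of_dvd (by omega) hd
  omega

/-- Any DFA over the one-letter alphabet `Unit` accepting the unary language
`L_m = { w | m ∣ w.length }` has at least `m` states. -/
theorem dfa_Lm_states_lower_bound (m : ℕ) (hm : 0 < m)
    {σ : Type*} [Fintype σ] (M : DFA Unit σ)
    (hM : M.accepts = {w : List Unit | m ∣ w.length}) :
    m ≤ Fintype.card σ := by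
  have hmem : ∀ w : List Unit, w ∈ M.accepts ↔ m ∣ w.length := by
    intro w; rw [hM]; rfl
  have hinj : Function.Injective (fun i : Fin m => M.eval (List.replicate i ())) := by
    intro i j hij
    simp only at hij
    rcases lt_trichotomy (i : ℕ) (j : ℕ) with h | h | h
    · exact absurd (dfa_aux m M hmem i j hij h j.isLt) (fun f => f)
    · exact Fin.ext h
    · exact absurd (dfa_aux m M hmem j i hij.symm h i.isLt) (fun f => f)
  calc m = Fintype.card (Fin m) := (Fintype.card_fin m).symm
    _ ≤ Fintype.card σ := Fintype.card_le_of_injective _ hinj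
end

section
/- Let m > 0 be a natural number and let N be a nondeterministic finite automaton over the one-letter alphabet Unit with a finite state type σ. If the language accepted by N equals { w : m ∣ w.length }, then N has at least m states, i.e., Fintype.card σ ≥ m. -/
lemma nfa_evalFrom_exists {σ : Type*} (N : NFA Unit σ) (y : List Unit) :
    ∀ (T : Set σ) (s : σ), s ∈ N.evalFrom T y ↔ ∃ q ∈ T, s ∈ N.evalFrom {q} y := by
  induction y with
  | nil => intro T s; simp [NFA.evalFrom_nil]
  | cons a y ih =>
    intro T s
    have h1 : N.evalFrom T (a :: y) = N.evalFrom (N.stepSet T a) y := rfl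
    rw [h1, ih]
    constructor
    · rintro ⟨p, hp, hs⟩
      rw [N.mem_stepSet] at hp
      obtain ⟨q, hq, hpq⟩ := hp
      refine ⟨q, hq, ?_⟩
      have h2 : N.evalFrom {q} (a :: y) = N.evalFrom (N.stepSet {q} a) y := rfl
      rw [h2, ih]
      exact ⟨p, by rw [N.mem_stepSet]; exact ⟨q, rfl, hpq⟩, hs⟩
    · rintro ⟨q, hq, hs⟩
      have h2 : N.evalFrom {q} (a :: y) = N.evalFrom (N.stepSet {q} a) y := rfl
      rw [h2, ih] at hs
      obtain ⟨p, hp, hs⟩ := hs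
      rw [N.mem_stepSet] at hp
      obtain ⟨q', hq', hpq⟩ := hp
      cases hq'
      exact ⟨p, by rw [N.mem_stepSet]; exact ⟨q, hq, hpq⟩, hs⟩

/-- Any NFA over the one-letter alphabet `Unit` accepting the unary language
`L_m = { w | m ∣ w.length }` has at least `m` states. -/
theorem nfa_Lm_states_lower_bound (m : ℕ) (hm : 0 < m)
    {σ : Type*} [Fintype σ] (N : NFA Unit σ)
    (hN : N.accepts = {w : List Unit | m ∣ w.length}) :
    m ≤ Fintype.card σ := by
  have hsplit : ∀ x y : List Unit, N.evalFrom N.start (x ++ y)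
      = N.evalFrom (N.evalFrom N.start x) y := fun x y => List.foldl_append ..
  have hacc : ∀ i : Fin m, ∃ q ∈ N.evalFrom N.start (List.replicate i ()),
      ∃ s ∈ N.accept, s ∈ N.evalFrom {q} (List.replicate (m - i) ()) := by
    intro i
    have hmem : (List.replicate (i:ℕ) () ++ List.replicate (m - i) ()) ∈ N.accepts := by
      rw [hN]
      have hlen : (List.replicate (i:ℕ) () ++ List.replicate (m - i) ()).length = m := by
        rw [List.length_append, List.length_replicate, List.length_replicate]
        omega
      show m ∣ _
      rw [hlen]
    rw [NFA.mem_accepts] at hmem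
    obtain ⟨s, hs, hse⟩ := hmem
    rw [hsplit, nfa_evalFrom_exists] at hse
    obtain ⟨q, hq, hq2⟩ := hse
    exact ⟨q, hq, s, hs, hq2⟩
  choose f hf1 g hg1 hg2 using hacc
  have hinj : Function.Injective f := by
    intro i j hij
    by_contra hne
    have hmem : (List.replicate (i:ℕ) () ++ List.replicate (m - j) ()) ∈ N.accepts := by
      rw [NFA.mem_accepts]
      refine ⟨g j, hg1 j, ?_⟩
      rw [hsplit, nfa_evalFrom_exists]
      exact ⟨f i, hf1 i, by rw [hij]; exact hg2 j⟩
    rw [hN] at hmem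
    change m ∣ _ at hmem
    rw [List.length_append, List.length_replicate,
      List.length_replicate] at hmem
    obtain ⟨k, hk⟩ := hmem
    have hi := i.2
    have hj := j.2
    have hne' : (i : ℕ) ≠ j := fun h => hne (Fin.ext h)
    rcases Nat.lt_or_ge k 2 with h2 | h2
    · interval_cases k <;> omega
    · have : m * 2 ≤ m * k := Nat.mul_le_mul_left m h2
      omega
  calc m = Fintype.card (Fin m) := (Fintype.card_fin m).symm
    _ ≤ Fintype.card σ := Fintype.card_le_of_injective f hinj
end

section
/- Let k ≥ 1 be a natural number and let M be a deterministic finite automaton over the alphabet Bool with a finite state type σ. If the language accepted by M equals E_k = { w : List Bool | ∃ x y, w = x ++ [true] ++ y ∧ y.length = k − 1 }, then M has at least 2^k states, i.e., Fintype.card σ ≥ 2^k. -/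
/-- Membership in `E_k` for a word of length `k + i` is determined by the symbol at index `i`. -/
lemma mem_Ek_iff (k i : ℕ) (hk : 1 ≤ k) (w : List Bool) (hw : w.length = k + i) :
    (∃ x y, w = x ++ [true] ++ y ∧ y.length = k - 1) ↔ ∃ h : i < w.length, w[i] = true := by
  constructor
  · rintro ⟨x, y, rfl, hy⟩
    have hx : x.length = i := by
      simp [List.length_append, hy] at hw
      omega
    refine ⟨by simp [List.length_append]; omega, ?_⟩
    subst hx
    rw [List.getElem_append_left (by simp)]
    rw [List.getElem_append_right le_rfl]
    simp
  · rintro ⟨h, hgt⟩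
    refine ⟨w.take i, w.drop (i + 1), ?_, by simp; omega⟩
    conv_lhs => rw [← List.take_append_drop i w]
    rw [List.drop_eq_getElem_cons h, hgt]
    simp

/-- Any DFA over the alphabet `Bool` accepting the language `E_k` of words whose `k`-th
symbol from the right is `true` has at least `2^k` states. -/
theorem dfa_Ek_states_lower_bound (k : ℕ) (hk : 1 ≤ k)
    {σ : Type*} [Fintype σ] (M : DFA Bool σ)
    (hM : M.accepts = {w : List Bool | ∃ x y, w = x ++ [true] ++ y ∧ y.length = k - 1}) :
    2 ^ k ≤ Fintype.card σ := by
  have hinj : Function.Injective (fun u : Fin k → Bool => M.eval (List.ofFn u)) := by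
    intro u v huv
    by_contra hne
    obtain ⟨i, hi⟩ : ∃ i, u i ≠ v i := by
      by_contra h
      push_neg at h
      exact hne (funext h)
    -- WLOG handled by symmetry: produce a contradiction from equal acceptance
    set z := List.replicate (i : ℕ) false with hz
    have heval : M.eval (List.ofFn u ++ z) = M.eval (List.ofFn v ++ z) := by
      simp only [DFA.eval, DFA.evalFrom_of_append]
      simp only [DFA.eval] at huv
      rw [huv]
    have hmem : (List.ofFn u ++ z ∈ M.accepts) ↔ (List.ofFn v ++ z ∈ M.accepts) := by
      rw [DFA.mem_accepts, DFA.mem_accepts, heval]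
    rw [hM] at hmem
    have hlen : ∀ f : Fin k → Bool, (List.ofFn f ++ z).length = k + i := by
      intro f; simp [hz]
    have hget : ∀ f : Fin k → Bool, ∃ h : (i : ℕ) < (List.ofFn f ++ z).length,
        (List.ofFn f ++ z)[(i : ℕ)] = f i := by
      intro f
      refine ⟨by rw [hlen]; omega, ?_⟩
      rw [List.getElem_append_left (by simp)]
      try simp
    have hmem' : (∃ x y, List.ofFn u ++ z = x ++ [true] ++ y ∧ y.length = k - 1) ↔
        (∃ x y, List.ofFn v ++ z = x ++ [true] ++ y ∧ y.length = k - 1) := hmem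
    rw [mem_Ek_iff k i hk _ (hlen u), mem_Ek_iff k i hk _ (hlen v)] at hmem'
    obtain ⟨hu1, hu2⟩ := hget u
    obtain ⟨hv1, hv2⟩ := hget v
    simp only [hu2, hv2] at hmem'
    apply hi
    cases hui : u i <;> cases hvi : v i <;> simp_all
  calc 2 ^ k = Fintype.card (Fin k → Bool) := by simp
    _ ≤ Fintype.card σ := Fintype.card_le_of_injective _ hinj
end

section
/- Let m ≥ 3 be an integer and μ₀ > 0 a real number. Set c = cos(π/m), s = sin(π/m), μ₁ = μ₀·c², and N_th = μ₀·|c|·√(1 − ln(c²)/(μ₀·s²)). Then the two Gaussian probability density functions with mean and variance both equal to μ₀, respectively both equal to μ₁, take the same value at x = N_th: (1/√(2π·μ₀))·exp(−(N_th − μ₀)²/(2μ₀)) = (1/√(2π·μ₁))·exp(−(N_th − μ₁)²/(2μ₁)). -/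
open Real

/-- The threshold `N_th = μ₀·|c|·√(1 − ln(c²)/(μ₀·s²))` is the intersection point of the
two Gaussian densities with mean = variance = `μ₀` and mean = variance = `μ₁ = μ₀·c²`,
where `c = cos(π/m)` and `s = sin(π/m)`. -/
theorem gaussians_intersect_at_threshold (m : ℕ) (hm : 3 ≤ m) (μ₀ : ℝ) (hμ₀ : 0 < μ₀)
    (c s μ₁ Nth : ℝ)
    (hc : c = Real.cos (π / m)) (hs : s = Real.sin (π / m))
    (hμ₁ : μ₁ = μ₀ * c ^ 2)
    (hNth : Nth = μ₀ * |c| * Real.sqrt (1 - Real.log (c ^ 2) / (μ₀ * s ^ 2))) :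
    (1 / Real.sqrt (2 * π * μ₀)) * Real.exp (-(Nth - μ₀) ^ 2 / (2 * μ₀)) =
    (1 / Real.sqrt (2 * π * μ₁)) * Real.exp (-(Nth - μ₁) ^ 2 / (2 * μ₁)) := by
  have hm3 : (3:ℝ) ≤ (m:ℝ) := by exact_mod_cast hm
  have hπm0 : 0 < π / m := by positivity
  have hπmlt : π / m < π / 2 := by
    apply div_lt_div_of_pos_left Real.pi_pos (by norm_num)
    linarith
  have hcpos : 0 < c := by
    rw [hc]; exact Real.cos_pos_of_mem_Ioo ⟨by linarith [Real.pi_pos], hπmlt⟩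
  have hspos : 0 < s := by
    rw [hs]; exact Real.sin_pos_of_pos_of_lt_pi hπm0 (by linarith [Real.pi_pos])
  have hpyth : s ^ 2 + c ^ 2 = 1 := by rw [hs, hc]; exact Real.sin_sq_add_cos_sq _
  have hlog : Real.log (c ^ 2) = 2 * Real.log c := by
    rw [Real.log_pow]; push_cast; ring
  have hLle : Real.log c ≤ 0 := Real.log_nonpos hcpos.le (by rw [hc]; exact Real.cos_le_one _)
  have hA : 0 ≤ 1 - Real.log (c ^ 2) / (μ₀ * s ^ 2) := by
    have : Real.log (c ^ 2) / (μ₀ * s ^ 2) ≤ 0 := by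
      apply div_nonpos_of_nonpos_of_nonneg
      · rw [hlog]; linarith
      · positivity
    linarith
  have hNsq : Nth ^ 2 = μ₀ ^ 2 * c ^ 2 * (1 - 2 * Real.log c / (μ₀ * s ^ 2)) := by
    rw [hNth, abs_of_pos hcpos, mul_pow, Real.sq_sqrt hA, hlog, mul_pow]
  have hμ₁pos : 0 < μ₁ := by rw [hμ₁]; positivity
  have key : -(Nth - μ₀) ^ 2 / (2 * μ₀) = -(Nth - μ₁) ^ 2 / (2 * μ₁) - Real.log c := by
    have hNsq' : Nth ^ 2 * s ^ 2 = μ₀ ^ 2 * c ^ 2 * s ^ 2 - 2 * μ₀ * c ^ 2 * Real.log c := by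
      rw [hNsq]; field_simp
    rw [hμ₁]
    field_simp
    linear_combination hNsq' - (Nth ^ 2 - μ₀ ^ 2 * c ^ 2) * hpyth
  rw [key, Real.exp_sub, Real.exp_log hcpos]
  have hsq : Real.sqrt (2 * π * μ₁) = Real.sqrt (2 * π * μ₀) * c := by
    rw [hμ₁, show 2 * π * (μ₀ * c ^ 2) = (2 * π * μ₀) * c ^ 2 by ring,
      Real.sqrt_mul (by positivity), Real.sqrt_sq hcpos.le]
  rw [hsq]
  have h0 : Real.sqrt (2 * π * μ₀) ≠ 0 := by positivity
  field_simp
end
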